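/- Let E be a real separable Banach space and let (μ_n) be a sequence of Gaussian Borel probability measures on E converging weakly to a Borel probability measure μ. Then μ is Gaussian. -/

import Mathlib

open MeasureTheory ProbabilityTheory Filter
open scoped NNReal Topology

/-- A Borel probability measure on a real Banach space is Gaussian if every continuous linear
functional pushes it forward to a (possibly degenerate) Gaussian measure on `ℝ`. -/
def IsGaussianMeasure {E : Type*} [NormedAddCommGroup E] [NormedSpace ℝ E]
    [MeasurableSpace E] (μ : Measure E) : Prop :=
  ∀ f : E →L[ℝ] ℝ, ∃ (m : ℝ) (v : ℝ≥0), μ.map f = gaussianReal m v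

open scoped ENNReal

namespace Stmt10Aux

lemma gaussian_eq_map (m : ℝ) (v : ℝ≥0) :
    gaussianReal m v = (gaussianReal 0 1).map (fun x => m + Real.sqrt v * x) := by
  have h1 : (gaussianReal 0 1).map (fun x => Real.sqrt v * x) = gaussianReal 0 v := by
    have h := gaussianReal_map_const_mul (μ := 0) (v := 1) (Real.sqrt v)
    simp only [mul_zero, mul_one] at h
    have hv : NNReal.mk ((Real.sqrt v) ^ 2) (sq_nonneg _) = v := by
      ext
      simp [Real.sq_sqrt v.coe_nonneg]
    rw [hv] at h
    simpa using h
  have h2 : (fun x => m + Real.sqrt v * x) = (fun x => m + x) ∘ (fun x => Real.sqrt v * x) := rfl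
  rw [h2, ← Measure.map_map (measurable_const_add m) (measurable_const_mul _), h1,
    gaussianReal_map_const_add, zero_add]

lemma integral_gaussian_eq (m : ℝ) (v : ℝ≥0) (g : ℝ → ℝ) (hg : Continuous g) :
    ∫ x, g x ∂(gaussianReal m v) = ∫ x, g (m + Real.sqrt v * x) ∂(gaussianReal 0 1) := by
  rw [gaussian_eq_map m v, integral_map (by fun_prop) hg.aestronglyMeasurable]

lemma tendsto_integral_gaussian {ms : ℕ → ℝ} {vs : ℕ → ℝ≥0} {m : ℝ} {v : ℝ≥0}
    (hm : Tendsto ms atTop (𝓝 m)) (hv : Tendsto vs atTop (𝓝 v))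
    (g : BoundedContinuousFunction ℝ ℝ) :
    Tendsto (fun n => ∫ x, g x ∂(gaussianReal (ms n) (vs n))) atTop
      (𝓝 (∫ x, g x ∂(gaussianReal m v))) := by
  simp_rw [integral_gaussian_eq _ _ g g.continuous]
  apply tendsto_integral_of_dominated_convergence (fun _ => ‖g‖)
  · exact fun n => (g.continuous.comp (by continuity)).aestronglyMeasurable
  · exact integrable_const _
  · exact fun n => ae_of_all _ fun x => g.norm_coe_le_norm _
  · refine ae_of_all _ fun x => ?_
    have : Tendsto (fun n => ms n + Real.sqrt (vs n) * x) atTop (𝓝 (m + Real.sqrt v * x)) := by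
      apply hm.add (Tendsto.mul_const _ _)
      exact (Real.continuous_sqrt.tendsto _).comp (NNReal.tendsto_coe.mpr hv)
    exact (g.continuous.tendsto _).comp this

lemma gaussian_Iio_le (m : ℝ) (v : ℝ≥0) : gaussianReal m v (Set.Iio m) ≤ 1/2 ∧
    gaussianReal m v (Set.Ioi m) ≤ 1/2 := by
  have hsym : gaussianReal 0 v (Set.Iio 0) = gaussianReal 0 v (Set.Ioi 0) := by
    have h := gaussianReal_map_const_mul (μ := 0) (v := v) (-1)
    simp only [mul_zero] at h
    have hv : NNReal.mk ((-1:ℝ) ^ 2) (sq_nonneg _) = 1 := by ext; norm_num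
    rw [hv, one_mul] at h
    calc gaussianReal 0 v (Set.Iio 0) = ((gaussianReal 0 v).map (-1 * ·)) (Set.Iio 0) := by
          rw [h]
      _ = gaussianReal 0 v ((-1 * ·) ⁻¹' Set.Iio 0) :=
          Measure.map_apply (measurable_const_mul _) measurableSet_Iio
      _ = gaussianReal 0 v (Set.Ioi 0) := by
          congr 1
          ext x
          simp
  have hred : ∀ (s : Set ℝ), MeasurableSet s →
      gaussianReal m v s = gaussianReal 0 v ((· + m) ⁻¹' s) := by
    intro s hs
    have h := gaussianReal_map_add_const (μ := 0) (v := v) m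
    rw [zero_add] at h
    rw [← h, Measure.map_apply (measurable_add_const m) hs]
  have h1 : gaussianReal m v (Set.Iio m) = gaussianReal 0 v (Set.Iio 0) := by
    rw [hred _ measurableSet_Iio]
    congr 1
    ext x; simp
  have h2 : gaussianReal m v (Set.Ioi m) = gaussianReal 0 v (Set.Ioi 0) := by
    rw [hred _ measurableSet_Ioi]
    congr 1
    ext x; simp
  have hsum : gaussianReal 0 v (Set.Iio 0) + gaussianReal 0 v (Set.Ioi 0) ≤ 1 := by
    rw [← measure_union (by simp [Set.disjoint_left]; exact fun a h => le_of_lt h) measurableSet_Ioi]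
    exact (measure_mono (Set.subset_univ _)).trans_eq measure_univ
  rw [← hsym, ← two_mul] at hsum
  have hhalf : gaussianReal 0 v (Set.Iio 0) ≤ 1/2 := by
    rw [ENNReal.le_div_iff_mul_le (by norm_num) (by norm_num), mul_comm]
    exact hsum
  exact ⟨h1.trans_le hhalf, h2.trans_le (hsym ▸ hhalf)⟩

lemma gaussian_le_of_ne_zero {m : ℝ} {v : ℝ≥0} (hv : v ≠ 0) (s : Set ℝ) (hs : MeasurableSet s) :
    gaussianReal m v s ≤ ENNReal.ofReal ((Real.sqrt (2 * Real.pi * v))⁻¹) * volume s := by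
  rw [gaussianReal_apply _ hv s]
  calc ∫⁻ x in s, gaussianPDF m v x
      ≤ ∫⁻ _ in s, ENNReal.ofReal ((Real.sqrt (2 * Real.pi * v))⁻¹) := by
        apply lintegral_mono
        intro x
        apply ENNReal.ofReal_le_ofReal
        unfold gaussianPDFReal
        calc (Real.sqrt (2 * Real.pi * v))⁻¹ * Real.exp (-(x - m)^2 / (2*v))
            ≤ (Real.sqrt (2 * Real.pi * v))⁻¹ * 1 := by
              apply mul_le_mul_of_nonneg_left _ (by positivity)
              rw [Real.exp_le_one_iff]
              apply div_nonpos_of_nonpos_of_nonneg (neg_nonpos.mpr (sq_nonneg _)) (by positivity)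
          _ = _ := mul_one _
    _ = ENNReal.ofReal ((Real.sqrt (2 * Real.pi * v))⁻¹) * volume s := by
        rw [setLIntegral_const]

lemma ofReal_three_quarters_lt_one : ENNReal.ofReal (3/4) < 1 := by
  rw [ENNReal.ofReal_lt_one]; norm_num

lemma half_lt_three_quarters : (1/2 : ℝ≥0∞) < ENNReal.ofReal (3/4) := by
  rw [show (1/2:ℝ≥0∞) = ENNReal.ofReal (1/2) by
    rw [ENNReal.ofReal_div_of_pos two_pos, ENNReal.ofReal_one, ENNReal.ofReal_ofNat]]
  exact (ENNReal.ofReal_lt_ofReal_iff_of_nonneg (by norm_num)).mpr (by norm_num)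

end Stmt10Aux

/-- On a real separable Banach space, a weak limit of Gaussian Borel
probability measures is Gaussian. -/
theorem stmt10 {E : Type*} [NormedAddCommGroup E] [NormedSpace ℝ E] [CompleteSpace E]
    [TopologicalSpace.SeparableSpace E] [MeasurableSpace E] [BorelSpace E]
    (μn : ℕ → Measure E) [∀ n, IsProbabilityMeasure (μn n)]
    (μ : Measure E) [IsProbabilityMeasure μ]
    (hgauss : ∀ n, IsGaussianMeasure (μn n))
    (hconv : ∀ g : BoundedContinuousFunction E ℝ,
      Tendsto (fun n => ∫ x, g x ∂μn n) atTop (𝓝 (∫ x, g x ∂μ))) :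
    IsGaussianMeasure μ := by
  intro f
  have hfm : Measurable (f : E → ℝ) := f.continuous.measurable
  choose ms vs hmv using fun n => hgauss n f
  have hνprob : IsProbabilityMeasure (μ.map (f : E → ℝ)) :=
    Measure.isProbabilityMeasure_map hfm.aemeasurable
  have hνnprob : ∀ n, IsProbabilityMeasure ((μn n).map (f : E → ℝ)) :=
    fun n => Measure.isProbabilityMeasure_map hfm.aemeasurable
  -- weak convergence of the pushforward measures
  have key : ∀ (κ : Measure E) (g : BoundedContinuousFunction ℝ ℝ),
      ∫ x, g x ∂(κ.map (f : E → ℝ))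
        = ∫ x, (g.compContinuous ⟨(f : E → ℝ), f.continuous⟩) x ∂κ := by
    intro κ g
    rw [integral_map hfm.aemeasurable g.continuous.aestronglyMeasurable]
    rfl
  have hconv' : ∀ g : BoundedContinuousFunction ℝ ℝ,
      Tendsto (fun n => ∫ x, g x ∂((μn n).map (f : E → ℝ))) atTop
        (𝓝 (∫ x, g x ∂(μ.map (f : E → ℝ)))) := by
    intro g
    simp_rw [key]
    exact hconv _
  -- convergence as probability measures
  let Pn : ℕ → ProbabilityMeasure ℝ := fun n => ⟨(μn n).map (f : E → ℝ), hνnprob n⟩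
  let P : ProbabilityMeasure ℝ := ⟨μ.map (f : E → ℝ), hνprob⟩
  have hP : Tendsto Pn atTop (𝓝 P) :=
    ProbabilityMeasure.tendsto_iff_forall_integral_tendsto.mpr hconv'
  -- choose R with limit measure of (-R, R) large
  obtain ⟨N₀, hN₀⟩ : ∃ N : ℕ, ENNReal.ofReal (3/4) < μ.map (f : E → ℝ) (Set.Ioo (-(N:ℝ)) N) := by
    have hU : Tendsto (fun n : ℕ => μ.map (f : E → ℝ) (Set.Ioo (-(n:ℝ)) n)) atTop
        (𝓝 (μ.map (f : E → ℝ) (⋃ n : ℕ, Set.Ioo (-(n:ℝ)) n))) := by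
      apply tendsto_measure_iUnion_atTop
      intro a b hab
      apply Set.Ioo_subset_Ioo (by exact_mod_cast neg_le_neg (Nat.cast_le.mpr hab))
        (Nat.cast_le.mpr hab)
    have hUeq : (⋃ n : ℕ, Set.Ioo (-(n:ℝ)) n) = Set.univ := by
      ext x
      simp only [Set.mem_iUnion, Set.mem_Ioo, Set.mem_univ, iff_true]
      obtain ⟨n, hn⟩ := exists_nat_gt |x|
      exact ⟨n, neg_lt_of_abs_lt hn, lt_of_abs_lt hn⟩
    rw [hUeq, measure_univ] at hU
    exact (hU.eventually (eventually_gt_nhds Stmt10Aux.ofReal_three_quarters_lt_one)).exists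
  set R : ℝ := (N₀ : ℝ) with hRdef
  have hR : 0 < R := by
    by_contra h
    push_neg at h
    rw [Set.Ioo_eq_empty (by intro hlt; exact absurd hlt (by simp only [not_lt]; linarith))] at hN₀
    simp at hN₀
  -- the measures of (-R, R) are eventually large
  have hlim : ∀ᶠ n in atTop,
      ENNReal.ofReal (3/4) < gaussianReal (ms n) (vs n) (Set.Ioo (-R) R) := by
    have h1 : μ.map (f : E → ℝ) (Set.Ioo (-R) R)
        ≤ atTop.liminf (fun n => ((Pn n : Measure ℝ)) (Set.Ioo (-R) R)) :=
      ProbabilityMeasure.le_liminf_measure_open_of_tendsto hP isOpen_Ioo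
    have h2 := Filter.eventually_lt_of_lt_liminf (lt_of_lt_of_le hN₀ h1)
    refine h2.mono fun n hn => ?_
    have : ((Pn n : Measure ℝ)) = gaussianReal (ms n) (vs n) := hmv n
    rwa [this] at hn
  set V : ℝ := (8*R/3)^2/(2*Real.pi) with hVdef
  have hV0 : 0 ≤ V := by positivity
  have hbound : ∀ᶠ n in atTop, ms n ∈ Set.Icc (-R) R ∧ (vs n : ℝ) ∈ Set.Icc (0:ℝ) V := by
    refine hlim.mono fun n hn => ?_
    constructor
    · constructor
      · by_contra h
        push_neg at h
        have hsub : Set.Ioo (-R) R ⊆ Set.Ioi (ms n) :=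
          fun x hx => lt_of_le_of_lt h.le hx.1
        have := hn.trans_le ((measure_mono hsub).trans (Stmt10Aux.gaussian_Iio_le (ms n) (vs n)).2)
        exact absurd this (not_lt_of_gt Stmt10Aux.half_lt_three_quarters)
      · by_contra h
        push_neg at h
        have hsub : Set.Ioo (-R) R ⊆ Set.Iio (ms n) :=
          fun x hx => lt_of_lt_of_le hx.2 h.le
        have := hn.trans_le ((measure_mono hsub).trans (Stmt10Aux.gaussian_Iio_le (ms n) (vs n)).1)
        exact absurd this (not_lt_of_gt Stmt10Aux.half_lt_three_quarters)
    · refine ⟨(vs n).coe_nonneg, ?_⟩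
      by_cases hv0 : vs n = 0
      · simp [hv0, hV0]
      have hble := hn.trans_le (Stmt10Aux.gaussian_le_of_ne_zero hv0 _ measurableSet_Ioo)
      rw [Real.volume_Ioo, show R - (-R) = 2*R by ring,
        ← ENNReal.ofReal_mul (by positivity)] at hble
      have hreal : (3/4 : ℝ) < (Real.sqrt (2 * Real.pi * vs n))⁻¹ * (2 * R) :=
        (ENNReal.ofReal_lt_ofReal_iff_of_nonneg (by norm_num)).mp hble
      set s : ℝ := Real.sqrt (2 * Real.pi * vs n) with hsdef
      have hspos : 0 < s := Real.sqrt_pos.mpr (by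
        have : (0:ℝ) < vs n := lt_of_le_of_ne (vs n).coe_nonneg
          (fun hc => hv0 (by ext; exact hc.symm))
        positivity)
      have hss : s * s⁻¹ = 1 := mul_inv_cancel₀ hspos.ne'
      have hslt : s < 8*R/3 := by nlinarith
      have hXlt : 2 * Real.pi * (vs n : ℝ) < (8*R/3)^2 := by
        have := (Real.sqrt_lt' (by positivity : (0:ℝ) < 8*R/3)).mp hslt
        exact this
      rw [hVdef]
      rw [le_div_iff₀ (by positivity)]
      nlinarith
  obtain ⟨N, hN⟩ := eventually_atTop.mp hbound
  -- extract a convergent subsequence of the parameters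
  have hcomp : IsCompact ((Set.Icc (-R) R) ×ˢ (Set.Icc (0:ℝ) V)) :=
    isCompact_Icc.prod isCompact_Icc
  obtain ⟨⟨m, w⟩, hmw, φ, hφ, hφtend⟩ :=
    hcomp.tendsto_subseq (x := fun k => (ms (N + k), (vs (N + k) : ℝ)))
      (fun k => by
        have := hN (N + k) (Nat.le_add_right _ _)
        exact Set.mk_mem_prod this.1 this.2)
  set v : ℝ≥0 := ⟨w, hmw.2.1⟩ with hvdef
  set ψ : ℕ → ℕ := fun k => N + φ k with hψdef
  have hψmono : StrictMono ψ := fun a b h => Nat.add_lt_add_left (hφ h) N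
  have hmtend : Tendsto (fun k => ms (ψ k)) atTop (𝓝 m) :=
    (continuous_fst.tendsto _).comp hφtend
  have hvtend : Tendsto (fun k => vs (ψ k)) atTop (𝓝 v) := by
    apply NNReal.tendsto_coe.mp
    exact (continuous_snd.tendsto _).comp hφtend
  -- the integrals agree in the limit
  have heq : ∀ g : BoundedContinuousFunction ℝ ℝ,
      ∫ x, g x ∂(μ.map (f : E → ℝ)) = ∫ x, g x ∂(gaussianReal m v) := by
    intro g
    have hA : Tendsto (fun k => ∫ x, g x ∂((μn (ψ k)).map (f : E → ℝ))) atTop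
        (𝓝 (∫ x, g x ∂(μ.map (f : E → ℝ)))) :=
      (hconv' g).comp hψmono.tendsto_atTop
    have hB : Tendsto (fun k => ∫ x, g x ∂((μn (ψ k)).map (f : E → ℝ))) atTop
        (𝓝 (∫ x, g x ∂(gaussianReal m v))) := by
      simp_rw [fun k => hmv (ψ k)]
      exact Stmt10Aux.tendsto_integral_gaussian hmtend hvtend g
    exact tendsto_nhds_unique hA hB
  refine ⟨m, v, ?_⟩
  apply ext_of_forall_lintegral_eq_of_IsFiniteMeasure
  intro f0
  let g : BoundedContinuousFunction ℝ ℝ :=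
    BoundedContinuousFunction.comp _ isometry_subtype_coe.lipschitz f0
  have hg : ∀ x, g x = (f0 x : ℝ) := fun x => rfl
  have h1 : ∫⁻ x, f0 x ∂(μ.map (f : E → ℝ))
      = ENNReal.ofReal (∫ x, g x ∂(μ.map (f : E → ℝ))) := by
    rw [lintegral_coe_eq_integral f0 (by exact g.integrable _)]
    rfl
  have h2 : ∫⁻ x, f0 x ∂(gaussianReal m v)
      = ENNReal.ofReal (∫ x, g x ∂(gaussianReal m v)) := by
    rw [lintegral_coe_eq_integral f0 (by exact g.integrable _)]
    rfl
  rw [h1, h2, heq g]
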